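/- arXiv:1406.6083 — 2 statements merged into one kernel-verified Lean document; each statement's English description precedes it below -/
import Mathlib

section
/- Let k be a field with char(k) ∉ {2, 3}, n ≥ 4, and work in S = k[x,y]/(x^n, x^{n-1}y, y^2 - x^3). If α = Σ_{i=0}^{n-1} a_i x^i + Σ_{i=0}^{n-2} b_i x^i y and β = Σ_{i=0}^{n-1} c_i x^i + Σ_{i=0}^{n-2} d_i x^i y are elements of S (with coefficients in a reduced commutative k-algebra A) satisfying α^n = 0, α^{n-1}β = 0, and β^2 = α^3, then a_0 = 0 and c_0 = 0. -/
/-- In `S ⊗_k A = A[x,y]/(x^n, x^{n-1}y, y^2 - x^3)` with `A` a reduced commutative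
`k`-algebra and `char k ∉ {2,3}`, if `α^n = 0`, `α^{n-1}β = 0` and `β^2 = α^3`,
then the constant coefficients `a_0` and `c_0` vanish. -/
theorem stmt4 (k : Type*) [Field k] (h2 : (2 : k) ≠ 0) (h3 : (3 : k) ≠ 0)
    (A : Type*) [CommRing A] [Algebra k A] [IsReduced A]
    (n : ℕ) (hn : 4 ≤ n)
    (a c : Fin n → A) (b d : Fin (n - 1) → A) :
    let x : MvPolynomial (Fin 2) A := MvPolynomial.X 0
    let y : MvPolynomial (Fin 2) A := MvPolynomial.X 1
    let I : Ideal (MvPolynomial (Fin 2) A) :=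
      Ideal.span {x ^ n, x ^ (n - 1) * y, y ^ 2 - x ^ 3}
    let α := Ideal.Quotient.mk I (∑ i : Fin n, MvPolynomial.C (a i) * x ^ (i : ℕ)
      + ∑ i : Fin (n - 1), MvPolynomial.C (b i) * x ^ (i : ℕ) * y)
    let β := Ideal.Quotient.mk I (∑ i : Fin n, MvPolynomial.C (c i) * x ^ (i : ℕ)
      + ∑ i : Fin (n - 1), MvPolynomial.C (d i) * x ^ (i : ℕ) * y)
    α ^ n = 0 → α ^ (n - 1) * β = 0 → β ^ 2 = α ^ 3 →
      a ⟨0, by omega⟩ = 0 ∧ c ⟨0, by omega⟩ = 0 := by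
  intro x y I α β hα hαβ hβ
  have hn0 : n ≠ 0 := by omega
  have hn1 : n - 1 ≠ 0 := by omega
  -- evaluation at x = y = 0
  set ev : MvPolynomial (Fin 2) A →+* A := (MvPolynomial.eval (fun _ => (0 : A)))
    with hev
  have hle : I ≤ RingHom.ker ev := by
    rw [Ideal.span_le]
    rintro p hp
    simp only [Set.mem_insert_iff, Set.mem_singleton_iff] at hp
    rcases hp with rfl | rfl | rfl <;>
      simp [hev, x, y, RingHom.mem_ker, zero_pow, hn0, hn1, (by omega : 3 ≠ 0)]
  set φ : MvPolynomial (Fin 2) A ⧸ I →+* A := Ideal.Quotient.lift I ev (fun p hp => RingHom.mem_ker.mp (hle hp)) with hφ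
  have key : ∀ (u : Fin n → A) (v : Fin (n - 1) → A),
      φ (Ideal.Quotient.mk I (∑ i : Fin n, MvPolynomial.C (u i) * x ^ (i : ℕ)
        + ∑ i : Fin (n - 1), MvPolynomial.C (v i) * x ^ (i : ℕ) * y))
      = u ⟨0, by omega⟩ := by
    intro u v
    rw [hφ, Ideal.Quotient.lift_mk]
    simp only [hev, x, y, map_add, map_sum, map_mul, map_pow,
      MvPolynomial.eval_C, MvPolynomial.eval_X]
    rw [Finset.sum_eq_single (⟨0, by omega⟩ : Fin n)]
    · simp
    · intro i _ hi
      have : (i : ℕ) ≠ 0 := by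
        intro h
        exact hi (Fin.ext h)
      simp [zero_pow this]
    · simp
  have hφα : φ α = a ⟨0, by omega⟩ := key a b
  have hφβ : φ β = c ⟨0, by omega⟩ := key c d
  have ha0 : a ⟨0, by omega⟩ = 0 := by
    have : (a ⟨0, by omega⟩) ^ n = 0 := by
      rw [← hφα, ← map_pow, hα, map_zero]
    exact IsReduced.eq_zero _ ⟨n, this⟩
  refine ⟨ha0, ?_⟩
  have hc2 : (c ⟨0, by omega⟩) ^ 2 = 0 := by
    have := congrArg φ hβ
    rw [map_pow, map_pow, hφα, hφβ, ha0] at this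
    simpa using this
  exact IsReduced.eq_zero _ ⟨2, hc2⟩
end

section
/- In the polynomial ring k[x,y] over a field k, for every n ≥ 2 one has the equality of ideals (x,y)^n + (y^2 - x^3) = (x^n, x^{n-1}y, y^2 - x^3). -/
open Ideal Pointwise

lemma aux5 {R : Type*} [CommRing R] (x y : R) (m : ℕ) :
    (Ideal.span {x, y}) ^ (m + 2) ≤
      Ideal.span {x ^ (m + 2), x ^ (m + 1) * y, y ^ 2 - x ^ 3} := by
  induction m with
  | zero =>
    have h : (Ideal.span {x, y}) ^ 2 = Ideal.span (({x, y} : Set R) * ({x, y} : Set R)) := by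
      rw [sq, Ideal.span_mul_span']
    rw [h, Ideal.span_le, Set.mul_subset_iff]
    intro a ha b hb
    simp only [Set.mem_insert_iff, Set.mem_singleton_iff] at ha hb
    rcases ha with ha | ha <;> rcases hb with hb | hb <;> rw [ha, hb]
    · have : x * x = x ^ (0 + 2) := by ring
      rw [this]; exact subset_span (by simp)
    · have : x * y = x ^ (0 + 1) * y := by ring
      rw [this]; exact subset_span (by simp)
    · have : y * x = x ^ (0 + 1) * y := by ring
      rw [this]; exact subset_span (by simp)
    · have : y * y = (y ^ 2 - x ^ 3) + x * x ^ (0 + 2) := by ring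
      rw [this]
      exact add_mem (subset_span (by simp))
        (Ideal.mul_mem_left _ _ (subset_span (by simp)))
  | succ m ih =>
    have h1 : (Ideal.span {x, y}) ^ (m + 1 + 2) =
        (Ideal.span {x, y}) ^ (m + 2) * Ideal.span {x, y} := by
      rw [← pow_succ]
    rw [h1]
    calc (Ideal.span {x, y}) ^ (m + 2) * Ideal.span {x, y}
        ≤ Ideal.span {x ^ (m + 2), x ^ (m + 1) * y, y ^ 2 - x ^ 3} * Ideal.span {x, y} :=
          Ideal.mul_mono_left ih
      _ = Ideal.span (({x ^ (m + 2), x ^ (m + 1) * y, y ^ 2 - x ^ 3} : Set R) * ({x, y} : Set R)) :=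
          Ideal.span_mul_span' _ _
      _ ≤ Ideal.span {x ^ (m + 1 + 2), x ^ (m + 1 + 1) * y, y ^ 2 - x ^ 3} := by
          rw [Ideal.span_le, Set.mul_subset_iff]
          intro a ha b hb
          simp only [Set.mem_insert_iff, Set.mem_singleton_iff] at ha hb
          have e1 : x ^ (m + 1 + 2) ∈
              Ideal.span {x ^ (m + 1 + 2), x ^ (m + 1 + 1) * y, y ^ 2 - x ^ 3} :=
            subset_span (by simp)
          have e2 : x ^ (m + 1 + 1) * y ∈
              Ideal.span {x ^ (m + 1 + 2), x ^ (m + 1 + 1) * y, y ^ 2 - x ^ 3} :=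
            subset_span (by simp)
          have ef : y ^ 2 - x ^ 3 ∈
              Ideal.span {x ^ (m + 1 + 2), x ^ (m + 1 + 1) * y, y ^ 2 - x ^ 3} :=
            subset_span (by simp)
          rcases ha with ha | ha | ha <;> rcases hb with hb | hb <;> rw [ha, hb]
          · have : x ^ (m + 2) * x = x ^ (m + 1 + 2) := by ring
            rw [this]; exact e1
          · have : x ^ (m + 2) * y = x ^ (m + 1 + 1) * y := by ring
            rw [this]; exact e2
          · have : x ^ (m + 1) * y * x = x ^ (m + 1 + 1) * y := by ring
            rw [this]; exact e2
          · have : x ^ (m + 1) * y * y = x ^ (m + 1) * (y ^ 2 - x ^ 3) + x * x ^ (m + 1 + 2) := by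
              ring
            rw [this]
            exact add_mem (Ideal.mul_mem_left _ _ ef) (Ideal.mul_mem_left _ _ e1)
          · exact Ideal.mul_mem_right _ _ ef
          · exact Ideal.mul_mem_right _ _ ef

/-- In `k[x,y]`, for every `n ≥ 2` one has `(x,y)^n + (y^2 - x^3) = (x^n, x^{n-1}y, y^2 - x^3)`. -/
theorem stmt5 (k : Type*) [Field k] (n : ℕ) (hn : 2 ≤ n) :
    let x : MvPolynomial (Fin 2) k := MvPolynomial.X 0
    let y : MvPolynomial (Fin 2) k := MvPolynomial.X 1
    (Ideal.span {x, y}) ^ n + Ideal.span {y ^ 2 - x ^ 3} =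
      Ideal.span {x ^ n, x ^ (n - 1) * y, y ^ 2 - x ^ 3} := by
  intro x y
  obtain ⟨m, rfl⟩ : ∃ m, n = m + 2 := ⟨n - 2, by omega⟩
  have hm : m + 2 - 1 = m + 1 := by omega
  rw [hm]
  apply le_antisymm
  · apply sup_le (aux5 x y m)
    rw [Ideal.span_le]
    intro p hp
    simp only [Set.mem_singleton_iff] at hp
    rw [hp]
    exact subset_span (by simp)
  · rw [Ideal.span_le]
    intro p hp
    simp only [Set.mem_insert_iff, Set.mem_singleton_iff] at hp
    rcases hp with hp | hp | hp <;> rw [hp]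
    · exact Ideal.mem_sup_left (Ideal.pow_mem_pow (subset_span (by simp)) _)
    · have h : (Ideal.span {x, y}) ^ (m + 2) =
          (Ideal.span {x, y}) ^ (m + 1) * Ideal.span {x, y} := by rw [← pow_succ]
      apply Ideal.mem_sup_left
      rw [h]
      exact Ideal.mul_mem_mul (Ideal.pow_mem_pow (subset_span (by simp)) _)
        (subset_span (by simp))
    · exact Ideal.mem_sup_right (subset_span (by simp))
end
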